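/- Let n ≥ 4 with n not divisible by 3, and let I_n = NI(C_n) ⊂ R = K[x_1,...,x_n]. Then depth(R/I_n^{n-1}) = 0; in particular the maximal ideal m = (x_1,...,x_n) is an associated prime of R/I_n^{n-1}. -/

import Mathlib

open MvPolynomial

/-- The closed neighborhood ideal of the cycle `C_n`, generated by
`x_{i-1} x_i x_{i+1}` for `i ∈ ℤ/n`. -/
noncomputable def cycleNI (K : Type*) [Field K] (n : ℕ) : Ideal (MvPolynomial (ZMod n) K) :=
  Ideal.span (Set.range fun i : ZMod n => X (i - 1) * X i * X (i + 1))

namespace CycleNIAux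

variable {K : Type*} [Field K] {n : ℕ}

lemma gen_mem (i : ZMod n) :
    (X (i - 1) * X i * X (i + 1) : MvPolynomial (ZMod n) K) ∈ cycleNI K n :=
  Ideal.subset_span ⟨i, rfl⟩

lemma prod_mem_pow {R : Type*} [CommRing R] (I : Ideal R) (f : ℕ → R) (h : ∀ k, f k ∈ I)
    (M : ℕ) : (∏ k ∈ Finset.range M, f k) ∈ I ^ M := by
  induction M with
  | zero => simp [Ideal.one_eq_top]
  | succ M ih =>
      rw [Finset.prod_range_succ, pow_succ]
      exact Ideal.mul_mem_mul ih (h M)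

lemma prod_range_shift [NeZero n] (f : ZMod n → MvPolynomial (ZMod n) K) (c : ZMod n) :
    ∏ r ∈ Finset.range n, f (c + (r : ZMod n)) = ∏ i : ZMod n, f i := by
  refine Finset.prod_nbij' (fun r => c + (r : ZMod n)) (fun i => (i - c).val) ?_ ?_ ?_ ?_ ?_
  · intro a _; exact Finset.mem_univ _
  · intro b _; exact Finset.mem_range.mpr (ZMod.val_lt _)
  · intro a ha
    show ((c + (a : ZMod n)) - c).val = a
    rw [add_sub_cancel_left]
    exact ZMod.val_natCast_of_lt (Finset.mem_range.mp ha)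
  · intro b _
    show c + (((b - c).val : ℕ) : ZMod n) = b
    rw [ZMod.natCast_val, ZMod.cast_id]
    ring
  · intro a _; rfl

lemma prod_range_mul_self [NeZero n] (c : ZMod n) (q : ℕ) :
    ∏ r ∈ Finset.range (q * n), (X (c + (r : ZMod n)) : MvPolynomial (ZMod n) K)
      = (∏ i : ZMod n, X i) ^ q := by
  induction q with
  | zero => simp
  | succ q ih =>
      have hsplit : (q + 1) * n = q * n + n := by ring
      rw [hsplit, Finset.prod_range_add, ih, pow_succ]
      congr 1
      have : ∀ r ∈ Finset.range n,
          (X (c + ((q * n + r : ℕ) : ZMod n)) : MvPolynomial (ZMod n) K)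
            = X (c + (r : ZMod n)) := by
        intro r _
        congr 1
        push_cast
        rw [ZMod.natCast_self]
        ring
      rw [Finset.prod_congr rfl this, prod_range_shift (fun i => (X i : MvPolynomial (ZMod n) K)) c]

lemma prod_triples [NeZero n] (b : ZMod n) (M : ℕ) :
    ∏ k ∈ Finset.range M,
        ((X (b + 1 + 3 * (k : ZMod n) - 1) * X (b + 1 + 3 * (k : ZMod n)) *
          X (b + 1 + 3 * (k : ZMod n) + 1)) : MvPolynomial (ZMod n) K)
      = ∏ r ∈ Finset.range (3 * M), X (b + (r : ZMod n)) := by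
  induction M with
  | zero => simp
  | succ M ih =>
      rw [Finset.prod_range_succ, ih]
      have h3 : 3 * (M + 1) = 3 * M + 1 + 1 + 1 := by ring
      rw [h3, Finset.prod_range_succ, Finset.prod_range_succ, Finset.prod_range_succ]
      have e1 : b + 1 + 3 * (M : ZMod n) - 1 = b + ((3 * M : ℕ) : ZMod n) := by
        push_cast; ring
      have e2 : b + 1 + 3 * (M : ZMod n) = b + ((3 * M + 1 : ℕ) : ZMod n) := by
        push_cast; ring
      have e3 : b + 1 + 3 * (M : ZMod n) + 1 = b + ((3 * M + 2 : ℕ) : ZMod n) := by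
        push_cast; ring
      rw [e1, e3, e2]
      ring

lemma key [NeZero n] (j : ZMod n) (q M : ℕ) (hqM : 3 * M = q * n + 1) :
    (X j : MvPolynomial (ZMod n) K) * (∏ i : ZMod n, X i) ^ q
      = ∏ k ∈ Finset.range M,
          (X (j + 1 + 3 * (k : ZMod n) - 1) * X (j + 1 + 3 * (k : ZMod n)) *
            X (j + 1 + 3 * (k : ZMod n) + 1)) := by
  rw [prod_triples j M, hqM, Finset.prod_range_succ']
  have h0 : (X (j + ((0 : ℕ) : ZMod n)) : MvPolynomial (ZMod n) K) = X j := by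
    norm_num
  have h1 : ∀ r ∈ Finset.range (q * n),
      (X (j + ((r + 1 : ℕ) : ZMod n)) : MvPolynomial (ZMod n) K)
        = X ((j + 1) + (r : ZMod n)) := by
    intro r _
    congr 1
    push_cast
    ring
  rw [h0, Finset.prod_congr rfl h1, prod_range_mul_self (j + 1) q]
  ring

end CycleNIAux

/-- For `n ≥ 4` with `3 ∤ n` and `I_n = NI(C_n)`, we have `depth(R/I_n^{n-1}) = 0`:
no element of the graded maximal ideal `m = (x_1,…,x_n)` is regular on `R/I_n^{n-1}`;
in particular `m` is an associated prime of `R/I_n^{n-1}`. -/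
theorem depth_cycleNI_pow (K : Type*) [Field K] (n : ℕ) (hn : 4 ≤ n) (h3 : ¬ (3 ∣ n)) :
    (∀ r ∈ Ideal.span (Set.range (X : ZMod n → MvPolynomial (ZMod n) K)),
        ¬ IsSMulRegular (MvPolynomial (ZMod n) K ⧸ (cycleNI K n) ^ (n - 1)) r) ∧
      Ideal.span (Set.range (X : ZMod n → MvPolynomial (ZMod n) K)) ∈
        associatedPrimes (MvPolynomial (ZMod n) K)
          (MvPolynomial (ZMod n) K ⧸ (cycleNI K n) ^ (n - 1)) := by
  haveI : NeZero n := ⟨by omega⟩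
  set R := MvPolynomial (ZMod n) K
  set I : Ideal R := cycleNI K n with hI
  set m : Ideal R := Ideal.span (Set.range (X : ZMod n → R)) with hm
  -- choose q, M with 3 M = q n + 1
  obtain ⟨q, M, hqM, hMle, hq⟩ : ∃ q M : ℕ, 3 * M = q * n + 1 ∧ M ≤ n - 1 ∧ q ≤ 2 := by
    have hmod : n % 3 = 1 ∨ n % 3 = 2 := by omega
    rcases hmod with h | h
    · exact ⟨2, (2 * n + 1) / 3, by omega, by omega, by omega⟩
    · exact ⟨1, (n + 1) / 3, by omega, by omega, by omega⟩
  set E : ℕ := n - 1 - M with hE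
  set g0 : R := X ((0 : ZMod n) - 1) * X (0 : ZMod n) * X ((0 : ZMod n) + 1) with hg0
  set w : R := (∏ i : ZMod n, X i) ^ q * g0 ^ E with hw
  -- Claim A : X j * w ∈ I ^ (n-1)
  have hA : ∀ j : ZMod n, (X j : R) * w ∈ I ^ (n - 1) := by
    intro j
    have hsplit : n - 1 = M + E := by omega
    have hmem1 : (∏ k ∈ Finset.range M,
        ((X (j + 1 + 3 * (k : ZMod n) - 1) * X (j + 1 + 3 * (k : ZMod n)) *
          X (j + 1 + 3 * (k : ZMod n) + 1)) : R)) ∈ I ^ M :=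
      CycleNIAux.prod_mem_pow I _ (fun k => CycleNIAux.gen_mem _) M
    have hmem2 : g0 ^ E ∈ I ^ E := Ideal.pow_mem_pow (CycleNIAux.gen_mem 0) E
    have : (X j : R) * w = (∏ k ∈ Finset.range M,
        ((X (j + 1 + 3 * (k : ZMod n) - 1) * X (j + 1 + 3 * (k : ZMod n)) *
          X (j + 1 + 3 * (k : ZMod n) + 1)) : R)) * g0 ^ E := by
      rw [hw, ← mul_assoc, CycleNIAux.key j q M hqM]
    rw [this, hsplit, pow_add]
    exact Ideal.mul_mem_mul hmem1 hmem2
  -- Claim B : w ∉ I ^ (n-1)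
  have hB : w ∉ I ^ (n - 1) := by
    intro hwmem
    set φ : R →ₐ[K] Polynomial K :=
      MvPolynomial.aeval (fun _ : ZMod n => (Polynomial.X : Polynomial K)) with hφ
    have hXa : ∀ a : ZMod n, φ (X a) = Polynomial.X := by
      intro a; rw [hφ, aeval_X]
    have hmap : Ideal.map φ (I ^ (n - 1)) ≤
        Ideal.span {(Polynomial.X : Polynomial K) ^ (3 * (n - 1))} := by
      rw [Ideal.map_pow]
      have h1 : Ideal.map φ I ≤ Ideal.span {(Polynomial.X : Polynomial K) ^ 3} := by
        rw [hI, cycleNI, Ideal.map_span, Ideal.span_le]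
        rintro _ ⟨_, ⟨i, rfl⟩, rfl⟩
        apply Ideal.subset_span
        rw [Set.mem_singleton_iff, map_mul, map_mul, hXa, hXa, hXa]
        ring
      calc (Ideal.map φ I) ^ (n - 1) ≤ (Ideal.span {(Polynomial.X : Polynomial K) ^ 3}) ^ (n - 1) :=
            Ideal.pow_right_mono h1 _
        _ = Ideal.span {(Polynomial.X : Polynomial K) ^ (3 * (n - 1))} := by
            rw [Ideal.span_singleton_pow, ← pow_mul]
    have hφw : φ w = Polynomial.X ^ (n * q + 3 * E) := by
      have hP : φ (∏ i : ZMod n, X i) = Polynomial.X ^ n := by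
        rw [map_prod]
        simp only [hXa]
        rw [Finset.prod_const, Finset.card_univ, ZMod.card]
      have hg : φ g0 = Polynomial.X ^ 3 := by
        rw [hg0, map_mul, map_mul, hXa, hXa, hXa]
        ring
      rw [hw, map_mul, map_pow, map_pow, hP, hg, ← pow_mul, ← pow_mul, ← pow_add]
    have hmem : φ w ∈ Ideal.span {(Polynomial.X : Polynomial K) ^ (3 * (n - 1))} :=
      hmap (Ideal.mem_map_of_mem φ hwmem)
    rw [hφw, Ideal.mem_span_singleton] at hmem
    have hlt : n * q + 3 * E < 3 * (n - 1) := by interval_cases q <;> omega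
    have := (Polynomial.X_pow_dvd_iff.mp hmem) (n * q + 3 * E) hlt
    rw [Polynomial.coeff_X_pow_self] at this
    exact one_ne_zero this
  -- the class of w in the quotient
  set wbar : R ⧸ I ^ (n - 1) := Ideal.Quotient.mk (I ^ (n - 1)) w with hwbar
  have hwbar_ne : wbar ≠ 0 := by
    rw [hwbar, Ne, Ideal.Quotient.eq_zero_iff_mem]
    exact hB
  have hsmul : ∀ r : R, r • wbar = Ideal.Quotient.mk (I ^ (n - 1)) (r * w) := by
    intro r
    rfl
  have hann : ∀ r ∈ m, r • wbar = 0 := by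
    intro r hr
    rw [hsmul, Ideal.Quotient.eq_zero_iff_mem]
    have hle : m ≤ (I ^ (n - 1)).colon (Ideal.span {w}) := by
      rw [hm, Ideal.span_le]
      rintro _ ⟨i, rfl⟩
      exact Ideal.mem_colon_span_singleton.mpr (hA i)
    exact Ideal.mem_colon_span_singleton.mp (hle hr)
  -- maximality of m
  have hmker : m = RingHom.ker (constantCoeff : R →+* K) := by
    ext f
    rw [hm, ← Set.image_univ, mem_ideal_span_X_image, RingHom.mem_ker]
    constructor
    · intro h
      by_contra hc
      have h0 : (0 : ZMod n →₀ ℕ) ∈ f.support := by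
        rw [mem_support_iff]
        exact hc
      obtain ⟨i, _, hi⟩ := h 0 h0
      simp at hi
    · intro h d hd
      have hd0 : d ≠ 0 := by
        intro h0
        rw [mem_support_iff, h0] at hd
        exact hd h
      obtain ⟨i, hi⟩ := Finsupp.ne_iff.mp hd0
      exact ⟨i, Set.mem_univ i, by simpa using hi⟩
  have hmax : m.IsMaximal := by
    rw [hmker]
    exact RingHom.ker_isMaximal_of_surjective _ (fun k => ⟨C k, constantCoeff_C _ k⟩)
  constructor
  · intro r hr hreg
    apply hwbar_ne
    apply hreg
    show r • wbar = r • 0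
    rw [hann r hr, smul_zero]
  · refine ⟨hmax.isPrime, wbar, ?_⟩
    have hle : m ≤ (Submodule.span R {wbar}).annihilator := by
      intro r hr
      rw [Submodule.mem_annihilator_span_singleton]
      exact hann r hr
    have hne : (Submodule.span R {wbar}).annihilator ≠ ⊤ := by
      intro htop
      apply hwbar_ne
      have h1 : (1 : R) ∈ (Submodule.span R {wbar}).annihilator := htop ▸ Submodule.mem_top
      rw [Submodule.mem_annihilator_span_singleton, one_smul] at h1
      exact h1
    have he : m = (Submodule.span R {wbar}).annihilator := hmax.eq_of_le hne hle
    have hc : (⊥ : Submodule R (R ⧸ I ^ (n - 1))).colon {wbar} =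
        (Submodule.span R {wbar}).annihilator := by
      ext r
      simp [Submodule.mem_colon, Submodule.mem_annihilator_span_singleton]
    rw [hc, ← he, hmax.isPrime.radical]
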